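/- Let M ∈ ℚ[[X, U]] be the two-variable formal power series whose coefficient of X^n U^k is the number of bicolored Motzkin paths of length n with exactly k steps in {U, O1}. Then M satisfies the functional equation M = 1 + (X + X·U)·M + U·X²·M². -/

import Mathlib

/-- The four kinds of steps: up, down, and two colors of horizontal steps. -/
inductive Step where
  | U : Step
  | D : Step
  | O1 : Step
  | O2 : Step
deriving DecidableEq

instance : Fintype Step :=
  ⟨{Step.U, Step.D, Step.O1, Step.O2}, fun x => by cases x <;> simp⟩

/-- Weight of a step: U has weight 1, D has weight −1, O1 and O2 weight 0. -/
def Step.wt : Step → ℤ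
  | .U => 1
  | .D => -1
  | .O1 => 0
  | .O2 => 0

/-- Height of a step word after its first `i` steps. -/
def stepHeight {n : ℕ} (r : Fin n → Step) (i : ℕ) : ℤ :=
  ∑ j ∈ Finset.univ.filter (fun j : Fin n => (j : ℕ) < i), (r j).wt

/-- Partial sum of a `±1`-sequence after its first `i` entries. -/
def partialSum {n : ℕ} (p : Fin n → ℤ) (i : ℕ) : ℤ :=
  ∑ j ∈ Finset.univ.filter (fun j : Fin n => (j : ℕ) < i), p j

/-- Number of bicolored Motzkin paths of length `n` with exactly `k` steps in
`{U, O1}`: step words staying weakly above the axis and ending at height 0. -/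
noncomputable def bicoloredMotzkinCount (n k : ℕ) : ℕ :=
  Nat.card {r : Fin n → Step //
    (∀ i ∈ Finset.range n, 0 ≤ stepHeight r (i + 1)) ∧
    stepHeight r n = 0 ∧
    (Finset.univ.filter fun i => r i = Step.U ∨ r i = Step.O1).card = k}

/-- Number of bilateral Motzkin paths of length `n` with exactly `k` steps in
`{U, O1}`: step words ending at height 0. -/
noncomputable def bilateralMotzkinCount (n k : ℕ) : ℕ :=
  Nat.card {r : Fin n → Step //
    stepHeight r n = 0 ∧
    (Finset.univ.filter fun i => r i = Step.U ∨ r i = Step.O1).card = k}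

/-- The generating function `M ∈ ℚ[[X,U]]` of bicolored Motzkin paths
(variable 0 is `X`, marking the length; variable 1 is `U`, marking the number
of steps in `{U, O1}`). -/
noncomputable def Mser : MvPowerSeries (Fin 2) ℚ :=
  fun d => (bicoloredMotzkinCount (d 0) (d 1) : ℚ)

/-- The generating function `W ∈ ℚ[[X,U]]` of bilateral Motzkin paths
(variable 0 is `X`, marking the length; variable 1 is `U`, marking the number
of steps in `{U, O1}`). -/
noncomputable def Wser : MvPowerSeries (Fin 2) ℚ :=
  fun d => (bilateralMotzkinCount (d 0) (d 1) : ℚ)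

namespace MAux

def ok : Step → Bool
  | .U => true | .O1 => true | _ => false

def wsum (l : List Step) : ℤ := (l.map Step.wt).sum

@[simp] lemma wsum_nil : wsum [] = 0 := rfl
@[simp] lemma wsum_cons (s : Step) (t : List Step) : wsum (s :: t) = s.wt + wsum t := by
  simp [wsum]
@[simp] lemma wsum_append (a b : List Step) : wsum (a ++ b) = wsum a + wsum b := by
  simp [wsum]

/-- The Finset of bicolored Motzkin lists of length n with k up/O1 steps. -/
noncomputable def motzF (n k : ℕ) : Finset (List Step) :=
  ((Finset.univ : Finset (Fin n → Step)).image List.ofFn).filter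
    (fun l => (∀ p ∈ l.inits, 0 ≤ wsum p) ∧ wsum l = 0 ∧ l.countP ok = k)

lemma mem_motzF {n k : ℕ} {l : List Step} :
    l ∈ motzF n k ↔ l.length = n ∧ (∀ i : ℕ, 0 ≤ wsum (l.take i)) ∧ wsum l = 0
      ∧ l.countP ok = k := by
  rw [motzF, Finset.mem_filter]
  constructor
  · rintro ⟨hl, h1, h2, h3⟩
    simp only [Finset.mem_image, Finset.mem_univ, true_and] at hl
    obtain ⟨r, rfl⟩ := hl
    refine ⟨by simp, fun i => h1 _ ((List.mem_inits _ _).2 (List.take_prefix i _)), h2, h3⟩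
  · rintro ⟨hl, h1, h2, h3⟩
    refine ⟨?_, fun p hp => ?_, h2, h3⟩
    · simp only [Finset.mem_image, Finset.mem_univ, true_and]
      exact ⟨fun i => l.get (Fin.cast hl.symm i), by subst hl; exact List.ofFn_get l⟩
    · rw [List.prefix_iff_eq_take.mp ((List.mem_inits _ _).1 hp)]
      exact h1 _

lemma sum_take_ofFn {n : ℕ} (g : Fin n → ℤ) (i : ℕ) :
    ((List.ofFn g).take i).sum = ∑ j ∈ Finset.univ.filter (fun j : Fin n => (j : ℕ) < i), g j := by
  induction n generalizing i with
  | zero => simp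
  | succ n ih =>
    rw [List.ofFn_succ]
    rw [Finset.sum_filter, Fin.sum_univ_succ, ← Finset.sum_filter]
    cases i with
    | zero => simp
    | succ i =>
      rw [List.take_succ_cons, List.sum_cons, ih]
      simp [Finset.sum_filter]

lemma stepHeight_eq {n : ℕ} (r : Fin n → Step) (i : ℕ) :
    stepHeight r i = wsum ((List.ofFn r).take i) := by
  rw [stepHeight, wsum, List.map_take, List.map_ofFn, sum_take_ofFn]
  rfl

lemma countP_ofFn {n : ℕ} (r : Fin n → Step) :
    (List.ofFn r).countP ok = (Finset.univ.filter fun i => r i = Step.U ∨ r i = Step.O1).card := by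
  rw [Finset.card_filter]
  induction n with
  | zero => simp
  | succ n ih =>
    rw [List.ofFn_succ, List.countP_cons, ih, Fin.sum_univ_succ]
    have : ∀ s : Step, (if ok s then 1 else 0) = (if s = Step.U ∨ s = Step.O1 then 1 else 0) := by
      rintro (_|_|_|_) <;> simp [ok]
    rw [this]
    ring

lemma card_motzF (n k : ℕ) : bicoloredMotzkinCount n k = (motzF n k).card := by
  classical
  rw [bicoloredMotzkinCount, Nat.card_eq_fintype_card, Fintype.card_subtype, motzF,
    Finset.filter_image, Finset.card_image_of_injective _ List.ofFn_injective]
  congr 1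
  apply Finset.filter_congr
  intro r _
  have hlen : (List.ofFn r).length = n := by simp
  constructor
  · rintro ⟨h1, h2, h3⟩
    have h2' : wsum (List.ofFn r) = 0 := by
      have := h2; rwa [stepHeight_eq, List.take_of_length_le (le_of_eq hlen)] at this
    refine ⟨fun p hp => ?_, h2', by rw [countP_ofFn]; exact h3⟩
    rw [List.prefix_iff_eq_take.mp ((List.mem_inits _ _).1 hp)]
    generalize (p.length) = i
    match i with
    | 0 => simp
    | (j+1) =>
      by_cases hj : j < n
      · have := h1 j (Finset.mem_range.2 hj)
        rwa [stepHeight_eq] at this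
      · rw [List.take_of_length_le (by omega), h2']
  · rintro ⟨h1, h2, h3⟩
    refine ⟨fun i _ => ?_, ?_, by rw [← countP_ofFn]; exact h3⟩
    · rw [stepHeight_eq]
      exact h1 _ ((List.mem_inits _ _).2 (List.take_prefix _ _))
    · rw [stepHeight_eq, List.take_of_length_le (le_of_eq hlen)]
      exact h2

/-- Motzkin condition for lists. -/
def isMt (l : List Step) : Prop := (∀ i : ℕ, 0 ≤ wsum (l.take i)) ∧ wsum l = 0

lemma mem_motzF' {n k : ℕ} {l : List Step} :
    l ∈ motzF n k ↔ l.length = n ∧ isMt l ∧ l.countP ok = k := by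
  rw [mem_motzF, isMt]; tauto

lemma wsum_take_append (a b : List Step) (i : ℕ) :
    wsum ((a ++ b).take i) = wsum (a.take i) + wsum (b.take (i - a.length)) := by
  rw [List.take_append, wsum_append]

lemma wt_cases (s : Step) : s.wt = 1 ∨ s.wt = -1 ∨ s.wt = 0 := by
  cases s <;> simp [Step.wt]

/-- First-return decomposition for a Motzkin list starting with `U`. -/
lemma U_decomp {t : List Step} (h : isMt (Step.U :: t)) :
    ∃ p q, t = p ++ Step.D :: q ∧ isMt p ∧ isMt q := by
  obtain ⟨h0, hz⟩ := h
  have hge : ∀ i, -1 ≤ wsum (t.take i) := by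
    intro i
    have := h0 (i + 1)
    rw [List.take_succ_cons, wsum_cons] at this
    simp only [Step.wt] at this
    omega
  have hwt : wsum t = -1 := by
    rw [wsum_cons] at hz; simp only [Step.wt] at hz; omega
  have hP : wsum (t.take t.length) = -1 := by
    rw [List.take_of_length_le le_rfl]; exact hwt
  classical
  have hex : ∃ i, wsum (t.take i) = -1 := ⟨t.length, hP⟩
  have hPm : wsum (t.take (Nat.find hex)) = -1 := Nat.find_spec hex
  have hmin : ∀ i < Nat.find hex, wsum (t.take i) ≠ -1 := fun i hi => Nat.find_min hex hi
  have hmle : Nat.find hex ≤ t.length := Nat.find_le hP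
  have hm0 : Nat.find hex ≠ 0 := by
    intro h; rw [h] at hPm; simp at hPm
  obtain ⟨j, hj⟩ : ∃ j, Nat.find hex = j + 1 := ⟨Nat.find hex - 1, by omega⟩
  rw [hj] at hPm hmle
  simp only [hj] at hmin
  have hjlen : j < t.length := by omega
  have htake : t.take (j+1) = t.take j ++ [t[j]] := by
    rw [List.take_succ, List.getElem?_eq_getElem hjlen]; rfl
  have hsum : wsum (t.take j) + (t[j]).wt = -1 := by
    rw [htake, wsum_append] at hPm
    simpa using hPm
  have hjpos : 0 ≤ wsum (t.take j) := by
    have := hmin j (by omega); have := hge j; omega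
  have hD : t[j] = Step.D ∧ wsum (t.take j) = 0 := by
    rcases wt_cases t[j] with hw | hw | hw
    · omega
    · constructor
      · cases hj : t[j] <;> simp_all [Step.wt]
      · omega
    · omega
  refine ⟨t.take j, t.drop (j+1), ?_, ⟨?_, hD.2⟩, ?_, ?_⟩
  · conv_lhs => rw [← List.take_append_drop j t]
    rw [List.drop_eq_getElem_cons hjlen, hD.1]
  · intro i
    rw [List.take_take]
    rcases le_or_gt i j with hij | hij
    · rw [min_eq_left hij]
      have := hmin i (by omega); have := hge i; omega
    · rw [min_eq_right (le_of_lt hij)]; omega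
  · intro i
    have key : wsum (t.take (j + 1 + i)) = wsum (t.take (j+1)) + wsum ((t.drop (j+1)).take i) := by
      rw [List.take_add, wsum_append]
    have := hge (j + 1 + i)
    rw [key, hPm] at this
    omega
  · have : wsum t = wsum (t.take (j+1)) + wsum (t.drop (j+1)) := by
      rw [← wsum_append, List.take_append_drop]
    rw [hPm] at this; omega

/-- Uniqueness of the first-return decomposition. -/
lemma glue_inj {p q p' q' : List Step} (hp : isMt p) (hp' : isMt p')
    (h : p ++ Step.D :: q = p' ++ Step.D :: q') : p = p' ∧ q = q' := by
  have key : ∀ a b : List Step, isMt a → isMt b → ∀ c d : List Step,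
      a ++ Step.D :: c = b ++ Step.D :: d → ¬ (a.length < b.length) := by
    intro a b ha hb c d hab hlt
    have htake : (a ++ Step.D :: c).take (a.length + 1) = a ++ [Step.D] := by
      rw [List.take_append, List.take_of_length_le (by omega)]
      simp
    have h2 : (b ++ Step.D :: d).take (a.length + 1) = b.take (a.length + 1) := by
      rw [List.take_append, show a.length + 1 - b.length = 0 by omega]
      simp
    have hb1 := hb.1 (a.length + 1)
    rw [← h2, ← hab, htake, wsum_append] at hb1
    have ha2 := ha.2
    simp [Step.wt] at hb1
    omega
  have hlen : p.length = p'.length := by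
    rcases lt_trichotomy p.length p'.length with h1 | h1 | h1
    · exact absurd h1 (key p p' hp hp' q q' h)
    · exact h1
    · exact absurd h1 (key p' p hp' hp q' q h.symm)
  obtain ⟨h1, h2⟩ := List.append_inj h hlen
  exact ⟨h1, by simpa using h2⟩

noncomputable def UF (m j : ℕ) : Finset (List Step) :=
  (Finset.HasAntidiagonal.antidiagonal m ×ˢ Finset.HasAntidiagonal.antidiagonal j).biUnion
    (fun x => ((motzF x.1.1 x.2.1) ×ˢ (motzF x.1.2 x.2.2)).image
      (fun pq => Step.U :: (pq.1 ++ Step.D :: pq.2)))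

lemma mem_UF {m j : ℕ} {l : List Step} :
    l ∈ UF m j ↔ ∃ p q, isMt p ∧ isMt q ∧ p.length + q.length = m ∧
      p.countP ok + q.countP ok = j ∧ l = Step.U :: (p ++ Step.D :: q) := by
  simp only [UF, Finset.mem_biUnion, Finset.mem_product, Finset.mem_image,
    Finset.HasAntidiagonal.mem_antidiagonal, Prod.exists]
  constructor
  · rintro ⟨a, b, c, e, ⟨hab, hce⟩, p, q, ⟨hp, hq⟩, rfl⟩
    rw [mem_motzF'] at hp hq
    exact ⟨p, q, hp.2.1, hq.2.1, by omega, by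
      rw [hp.2.2, hq.2.2]; omega, rfl⟩
  · rintro ⟨p, q, hp, hq, hm, hj, rfl⟩
    exact ⟨p.length, q.length, p.countP ok, q.countP ok, ⟨hm, hj⟩, p, q,
      ⟨mem_motzF'.2 ⟨rfl, hp, rfl⟩, mem_motzF'.2 ⟨rfl, hq, rfl⟩⟩, rfl⟩

lemma card_UF (m j : ℕ) :
    (UF m j).card = ∑ ab ∈ Finset.HasAntidiagonal.antidiagonal m, ∑ ce ∈ Finset.HasAntidiagonal.antidiagonal j,
      (motzF ab.1 ce.1).card * (motzF ab.2 ce.2).card := by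
  rw [UF, Finset.card_biUnion, Finset.sum_product]
  · apply Finset.sum_congr rfl
    intro ab _
    apply Finset.sum_congr rfl
    intro ce _
    rw [Finset.card_image_of_injOn, Finset.card_product]
    rintro ⟨p, q⟩ hpq ⟨p', q'⟩ hpq' hglue
    simp only [Finset.mem_product, Finset.mem_coe, mem_motzF'] at hpq hpq'
    simp only [List.cons.injEq, true_and] at hglue
    obtain ⟨rfl, rfl⟩ := glue_inj hpq.1.2.1 hpq'.1.2.1 hglue
    rfl
  · rintro ⟨⟨a, b⟩, ⟨c, e⟩⟩ hx ⟨⟨a', b'⟩, ⟨c', e'⟩⟩ hy hxy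
    rw [Function.onFun, Finset.disjoint_left]
    rintro l hl hl'
    simp only [Finset.mem_image, Finset.mem_product, Prod.exists] at hl hl'
    obtain ⟨p, q, ⟨hp, hq⟩, rfl⟩ := hl
    obtain ⟨p', q', ⟨hp', hq'⟩, hglue⟩ := hl'
    rw [mem_motzF'] at hp hq hp' hq'
    simp only [List.cons.injEq, true_and] at hglue
    obtain ⟨rfl, rfl⟩ := glue_inj hp'.2.1 hp.2.1 hglue
    apply hxy
    simp only [Prod.mk.injEq]
    refine ⟨⟨?_, ?_⟩, ?_, ?_⟩ <;> omega

lemma isMt_cons_zero {s : Step} (hs : s.wt = 0) {t : List Step} : isMt (s :: t) ↔ isMt t := by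
  constructor
  · rintro ⟨h1, h2⟩
    rw [wsum_cons, hs, zero_add] at h2
    refine ⟨fun i => ?_, h2⟩
    have := h1 (i + 1)
    rwa [List.take_succ_cons, wsum_cons, hs, zero_add] at this
  · rintro ⟨h1, h2⟩
    refine ⟨fun i => ?_, by rw [wsum_cons, hs, zero_add]; exact h2⟩
    cases i with
    | zero => simp
    | succ i => rw [List.take_succ_cons, wsum_cons, hs, zero_add]; exact h1 i

@[simp] lemma ok_simp : ok Step.U = true ∧ ok Step.O1 = true ∧ ok Step.D = false
    ∧ ok Step.O2 = false := by simp [ok]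

lemma O2_cons_mem {n k : ℕ} {t : List Step} :
    Step.O2 :: t ∈ motzF (n + 1) k ↔ t ∈ motzF n k := by
  rw [mem_motzF', mem_motzF', isMt_cons_zero (by simp [Step.wt]),
    List.countP_cons_of_neg (p := ok) (a := Step.O2) (by simp [ok]), List.length_cons,
    Nat.add_right_cancel_iff]

lemma O1_cons_mem {n k : ℕ} {t : List Step} :
    Step.O1 :: t ∈ motzF (n + 1) (k + 1) ↔ t ∈ motzF n k := by
  rw [mem_motzF', mem_motzF', isMt_cons_zero (by simp [Step.wt]),
    List.countP_cons_of_pos (p := ok) (a := Step.O1) (by simp [ok]), List.length_cons]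
  constructor
  · rintro ⟨h1, h2, h3⟩; exact ⟨by omega, h2, by omega⟩
  · rintro ⟨h1, h2, h3⟩; exact ⟨by omega, h2, by omega⟩

lemma D_cons_not_mem {n k : ℕ} {t : List Step} : Step.D :: t ∉ motzF n k := by
  rw [mem_motzF']
  rintro ⟨-, ⟨h1, -⟩, -⟩
  have := h1 1
  simp [Step.wt] at this

lemma isMt_glue {p q : List Step} (hp : isMt p) (hq : isMt q) :
    isMt (Step.U :: (p ++ Step.D :: q)) := by
  have hDq : ∀ j : ℕ, -1 ≤ wsum ((Step.D :: q).take j) := by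
    intro j
    cases j with
    | zero => simp
    | succ j =>
      rw [List.take_succ_cons, wsum_cons]
      have := hq.1 j
      simp only [Step.wt]
      omega
  constructor
  · intro i
    cases i with
    | zero => simp
    | succ i =>
      rw [List.take_succ_cons, wsum_cons, wsum_take_append]
      have h1 := hp.1 i
      have h2 := hDq (i - p.length)
      simp only [Step.wt]
      omega
  · rw [wsum_cons, wsum_append, wsum_cons, hp.2, hq.2]
    simp [Step.wt]

lemma UF_subset {n k : ℕ} : UF n k ⊆ motzF (n + 2) (k + 1) := by
  intro l hl
  rw [mem_UF] at hl
  obtain ⟨p, q, hp, hq, hm, hj, rfl⟩ := hl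
  rw [mem_motzF']
  refine ⟨by simp; omega, isMt_glue hp hq, ?_⟩
  rw [List.countP_cons_of_pos (p := ok) (a := Step.U) (by simp [ok]), List.countP_append,
    List.countP_cons_of_neg (p := ok) (a := Step.D) (by simp [ok])]
  omega

lemma motzF_zero (k : ℕ) : motzF 0 k = if k = 0 then {[]} else ∅ := by
  ext l
  rw [mem_motzF']
  constructor
  · rintro ⟨hl, -, hk⟩
    rw [List.length_eq_zero_iff] at hl
    subst hl
    simp at hk
    simp [← hk]
  · intro hl
    split at hl <;> simp at hl
    subst hl
    refine ⟨rfl, ⟨fun i => by simp, rfl⟩, by simp_all⟩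

lemma motzF_succ_zero (n : ℕ) : motzF (n + 1) 0 = (motzF n 0).image (Step.O2 :: ·) := by
  ext l
  constructor
  · intro hl
    have hlen : l.length = n + 1 := (mem_motzF'.1 hl).1
    cases l with
    | nil => simp at hlen
    | cons s t =>
      have hcount : (s :: t).countP ok = 0 := (mem_motzF'.1 hl).2.2
      cases s
      · rw [List.countP_cons_of_pos (p := ok) (a := Step.U) (by simp [ok])] at hcount; omega
      · exact absurd hl D_cons_not_mem
      · rw [List.countP_cons_of_pos (p := ok) (a := Step.O1) (by simp [ok])] at hcount; omega
      · rw [Finset.mem_image]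
        exact ⟨t, O2_cons_mem.1 hl, rfl⟩
  · intro hl
    rw [Finset.mem_image] at hl
    obtain ⟨t, ht, rfl⟩ := hl
    exact O2_cons_mem.2 ht

lemma motzF_one (k : ℕ) : motzF 1 (k + 1) =
    (motzF 0 (k + 1)).image (Step.O2 :: ·) ∪ (motzF 0 k).image (Step.O1 :: ·) := by
  ext l
  constructor
  · intro hl
    obtain ⟨hlen, hM, hcount⟩ := mem_motzF'.1 hl
    cases l with
    | nil => simp at hlen
    | cons s t =>
      have ht : t = [] := by
        simpa using hlen
      subst ht
      rw [Finset.mem_union, Finset.mem_image, Finset.mem_image]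
      cases s
      · exfalso; have := hM.2; simp [Step.wt] at this
      · exact absurd hl D_cons_not_mem
      · exact Or.inr ⟨[], O1_cons_mem.1 hl, rfl⟩
      · exact Or.inl ⟨[], O2_cons_mem.1 hl, rfl⟩
  · intro hl
    rw [Finset.mem_union, Finset.mem_image, Finset.mem_image] at hl
    rcases hl with ⟨t, ht, rfl⟩ | ⟨t, ht, rfl⟩
    · exact O2_cons_mem.2 ht
    · exact O1_cons_mem.2 ht

lemma motzF_succ_succ (n k : ℕ) : motzF (n + 2) (k + 1) =
    ((motzF (n + 1) (k + 1)).image (Step.O2 :: ·) ∪ (motzF (n + 1) k).image (Step.O1 :: ·))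
      ∪ UF n k := by
  ext l
  constructor
  · intro hl
    obtain ⟨hlen, hM, hcount⟩ := mem_motzF'.1 hl
    cases l with
    | nil => simp at hlen
    | cons s t =>
      rw [Finset.mem_union, Finset.mem_union, Finset.mem_image, Finset.mem_image]
      cases s
      · -- U case
        refine Or.inr ?_
        obtain ⟨p, q, rfl, hp, hq⟩ := U_decomp hM
        rw [mem_UF]
        refine ⟨p, q, hp, hq, ?_, ?_, rfl⟩
        · simp at hlen; omega
        · rw [List.countP_cons_of_pos (p := ok) (a := Step.U) (by simp [ok]), List.countP_append,
            List.countP_cons_of_neg (p := ok) (a := Step.D) (by simp [ok])] at hcount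
          omega
      · exact absurd hl D_cons_not_mem
      · refine Or.inl (Or.inr ⟨t, O1_cons_mem.1 hl, rfl⟩)
      · exact Or.inl (Or.inl ⟨t, O2_cons_mem.1 hl, rfl⟩)
  · intro hl
    rw [Finset.mem_union, Finset.mem_union, Finset.mem_image, Finset.mem_image] at hl
    rcases hl with (⟨t, ht, rfl⟩ | ⟨t, ht, rfl⟩) | hl
    · exact O2_cons_mem.2 ht
    · exact O1_cons_mem.2 ht
    · exact UF_subset hl

lemma disj_O2_O1 (a b c d : ℕ) :
    Disjoint ((motzF a b).image (Step.O2 :: ·)) ((motzF c d).image (Step.O1 :: ·)) := by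
  rw [Finset.disjoint_left]
  rintro l hl hl'
  simp only [Finset.mem_image] at hl hl'
  obtain ⟨t, -, rfl⟩ := hl
  obtain ⟨t', -, h⟩ := hl'
  simp at h

lemma card_rec₀ (n : ℕ) : (motzF (n + 1) 0).card = (motzF n 0).card := by
  rw [motzF_succ_zero, Finset.card_image_of_injective _ (List.cons_injective)]

lemma card_rec₁ (k : ℕ) :
    (motzF 1 (k + 1)).card = (motzF 0 (k + 1)).card + (motzF 0 k).card := by
  rw [motzF_one, Finset.card_union_of_disjoint (disj_O2_O1 _ _ _ _),
    Finset.card_image_of_injective _ (List.cons_injective),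
    Finset.card_image_of_injective _ (List.cons_injective)]

lemma card_rec₂ (n k : ℕ) :
    (motzF (n + 2) (k + 1)).card
      = (motzF (n + 1) (k + 1)).card + (motzF (n + 1) k).card
        + ∑ ab ∈ Finset.HasAntidiagonal.antidiagonal n, ∑ ce ∈ Finset.HasAntidiagonal.antidiagonal k,
            (motzF ab.1 ce.1).card * (motzF ab.2 ce.2).card := by
  have hdisj : Disjoint
      ((motzF (n + 1) (k + 1)).image (Step.O2 :: ·) ∪ (motzF (n + 1) k).image (Step.O1 :: ·))
      (UF n k) := by
    rw [Finset.disjoint_left]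
    rintro l hl hl'
    rw [mem_UF] at hl'
    obtain ⟨p, q, -, -, -, -, rfl⟩ := hl'
    simp only [Finset.mem_union, Finset.mem_image] at hl
    rcases hl with ⟨t, -, h⟩ | ⟨t, -, h⟩ <;> simp at h
  rw [motzF_succ_succ, Finset.card_union_of_disjoint hdisj,
    Finset.card_union_of_disjoint (disj_O2_O1 _ _ _ _),
    Finset.card_image_of_injective _ (List.cons_injective),
    Finset.card_image_of_injective _ (List.cons_injective), card_UF]

/-- The master recursion for the counts. -/
lemma count_rec (n k : ℕ) :
    bicoloredMotzkinCount n k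
      = (if n = 0 ∧ k = 0 then 1 else 0)
        + (if 1 ≤ n then bicoloredMotzkinCount (n - 1) k else 0)
        + (if 1 ≤ n ∧ 1 ≤ k then bicoloredMotzkinCount (n - 1) (k - 1) else 0)
        + (if 2 ≤ n ∧ 1 ≤ k then
            ∑ ab ∈ Finset.HasAntidiagonal.antidiagonal (n - 2), ∑ ce ∈ Finset.HasAntidiagonal.antidiagonal (k - 1),
              bicoloredMotzkinCount ab.1 ce.1 * bicoloredMotzkinCount ab.2 ce.2
          else 0) := by
  simp only [card_motzF]
  match n, k with
  | 0, k =>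
    simp only [Nat.le_zero, and_true, Nat.not_succ_le_zero, if_false, true_and]
    rw [motzF_zero]
    split
    · split <;> simp_all
    · split <;> simp_all
  | (n+1), 0 =>
    simp [card_rec₀]
  | 1, (k+1) =>
    simpa using card_rec₁ k
  | (n+2), (k+1) =>
    simpa using card_rec₂ n k

open Finsupp

noncomputable def pr (a c : ℕ) : Fin 2 →₀ ℕ := Finsupp.single 0 a + Finsupp.single 1 c

@[simp] lemma pr_0 (a c : ℕ) : pr a c 0 = a := by
  simp [pr, Finsupp.single_apply]

@[simp] lemma pr_1 (a c : ℕ) : pr a c 1 = c := by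
  simp [pr, Finsupp.single_apply]

lemma fin2_ext {u v : Fin 2 →₀ ℕ} (h0 : u 0 = v 0) (h1 : u 1 = v 1) : u = v := by
  ext i
  fin_cases i
  · exact h0
  · exact h1

lemma pr_eq (u : Fin 2 →₀ ℕ) : pr (u 0) (u 1) = u := fin2_ext (by simp) (by simp)

lemma fin2_le {u d : Fin 2 →₀ ℕ} : u ≤ d ↔ u 0 ≤ d 0 ∧ u 1 ≤ d 1 := by
  rw [Finsupp.le_def]
  constructor
  · intro h; exact ⟨h 0, h 1⟩
  · rintro ⟨h0, h1⟩ i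
    fin_cases i
    · exact h0
    · exact h1

lemma coeff_Mser (d : Fin 2 →₀ ℕ) :
    MvPowerSeries.coeff d Mser = (bicoloredMotzkinCount (d 0) (d 1) : ℚ) := rfl

lemma coeff_sq (e : Fin 2 →₀ ℕ) :
    MvPowerSeries.coeff e (Mser * Mser)
      = ∑ ab ∈ Finset.HasAntidiagonal.antidiagonal (e 0), ∑ ce ∈ Finset.HasAntidiagonal.antidiagonal (e 1),
          ((bicoloredMotzkinCount ab.1 ce.1 : ℚ) * (bicoloredMotzkinCount ab.2 ce.2 : ℚ)) := by
  classical
  rw [MvPowerSeries.coeff_mul, ← Finset.sum_product']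
  refine Finset.sum_nbij' (i := fun p => ((p.1 0, p.2 0), (p.1 1, p.2 1)))
    (j := fun x => (pr x.1.1 x.2.1, pr x.1.2 x.2.2)) ?_ ?_ ?_ ?_ ?_
  · rintro ⟨u, v⟩ h
    rw [Finset.HasAntidiagonal.mem_antidiagonal] at h
    simp only [Finset.mem_product, Finset.HasAntidiagonal.mem_antidiagonal]
    constructor
    · rw [← Finsupp.add_apply, h]
    · rw [← Finsupp.add_apply, h]
  · rintro ⟨⟨a, b⟩, ⟨c, e'⟩⟩ h
    simp only [Finset.mem_product, Finset.HasAntidiagonal.mem_antidiagonal] at h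
    rw [Finset.HasAntidiagonal.mem_antidiagonal]
    apply fin2_ext <;> simp [Finsupp.add_apply, h.1, h.2]
  · rintro ⟨u, v⟩ h
    simp only [Prod.mk.injEq]
    exact ⟨pr_eq u, pr_eq v⟩
  · rintro ⟨⟨a, b⟩, ⟨c, e'⟩⟩ h
    simp
  · rintro ⟨u, v⟩ h
    rfl

end MAux


open MAux in
open MvPowerSeries in
/-- First-return functional equation for bicolored Motzkin paths:
`M = 1 + (X + X·U)·M + U·X²·M²`. -/
theorem Mser_functional_equation :
    Mser = 1 + (X 0 + X 0 * X 1) * Mser + X 1 * (X 0) ^ 2 * Mser ^ 2 := by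
  classical
  have hX01 : (X 0 : MvPowerSeries (Fin 2) ℚ) * X 1
      = monomial (Finsupp.single 0 1 + Finsupp.single 1 1) 1 := by
    rw [X_def, X_def, monomial_mul_monomial, one_mul]
  have hX102 : (X 1 : MvPowerSeries (Fin 2) ℚ) * (X 0) ^ 2
      = monomial (Finsupp.single 1 1 + Finsupp.single 0 2) 1 := by
    rw [X_def, X_pow_eq, monomial_mul_monomial, one_mul]
  apply MvPowerSeries.ext
  intro d
  have hd0 : (d = 0) ↔ (d 0 = 0 ∧ d 1 = 0) := by
    constructor
    · rintro rfl; simp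
    · rintro ⟨h0, h1⟩; exact fin2_ext (by simpa using h0) (by simpa using h1)
  rw [map_add, map_add, add_mul, map_add, hX01, hX102, sq Mser, X_def 0,
    coeff_monomial_mul, coeff_monomial_mul, coeff_monomial_mul,
    coeff_Mser, MvPowerSeries.coeff_one]
  simp only [coeff_Mser, coeff_sq, one_mul, hd0, fin2_le, Finsupp.tsub_apply,
    Finsupp.add_apply, Finsupp.single_apply, if_true, if_false]
  norm_num
  rw [count_rec (d 0) (d 1)]
  push_cast [apply_ite (Nat.cast : ℕ → ℚ)]
  ring
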